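/- Let C ⊆ ℝ^d with C ≠ {0} and suppose the uncertainty angle α(C) = inf_{ĉ∈S^d} sup_{c∈C} θ(c,ĉ) is strictly less than π/2. Then the circumcenter (the minimizing ĉ ∈ S^d) is unique. -/

import Mathlib

open RealInnerProductSpace Real Classical

/-- Angle between a vector `c` and a unit vector `ĉ`, with the convention `θ(0, ĉ) = 0`. -/

noncomputable def vecAngle {d : ℕ} (c chat : EuclideanSpace ℝ (Fin d)) : ℝ :=
  if c = 0 then 0 else Real.arccos (⟪c, chat⟫ / ‖c‖)

lemma vecAngle_nonneg {d : ℕ} (c chat : EuclideanSpace ℝ (Fin d)) : 0 ≤ vecAngle c chat := by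
  unfold vecAngle; split
  · exact le_rfl
  · exact Real.arccos_nonneg _

lemma vecAngle_le_pi {d : ℕ} (c chat : EuclideanSpace ℝ (Fin d)) : vecAngle c chat ≤ π := by
  unfold vecAngle; split
  · exact Real.pi_pos.le
  · exact Real.arccos_le_pi _

lemma arccos_antitone : Antitone Real.arccos := fun x y h =>
  sub_le_sub_left (Real.monotone_arcsin h) _

lemma bdd_vecAngle {d : ℕ} (C : Set (EuclideanSpace ℝ (Fin d)))
    (chat : EuclideanSpace ℝ (Fin d)) :
    BddAbove (Set.range fun c : C => vecAngle (c : EuclideanSpace ℝ (Fin d)) chat) := by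
  refine ⟨π, ?_⟩
  rintro _ ⟨c, rfl⟩
  exact vecAngle_le_pi _ _

/-- if the uncertainty angle of `C` is `< π/2`, the circumcenter is unique:
any two unit vectors both achieving the minimal worst-case angle coincide. -/
theorem stmt5 (d : ℕ) (C : Set (EuclideanSpace ℝ (Fin d)))
    (hne : C.Nonempty) (hC : C ≠ {0})
    (chat₁ chat₂ : EuclideanSpace ℝ (Fin d))
    (h₁ : ‖chat₁‖ = 1) (h₂ : ‖chat₂‖ = 1)
    (hopt₁ : ∀ chat' : EuclideanSpace ℝ (Fin d), ‖chat'‖ = 1 →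
      (⨆ c : C, vecAngle (c : EuclideanSpace ℝ (Fin d)) chat₁) ≤
      (⨆ c : C, vecAngle (c : EuclideanSpace ℝ (Fin d)) chat'))
    (hopt₂ : ∀ chat' : EuclideanSpace ℝ (Fin d), ‖chat'‖ = 1 →
      (⨆ c : C, vecAngle (c : EuclideanSpace ℝ (Fin d)) chat₂) ≤
      (⨆ c : C, vecAngle (c : EuclideanSpace ℝ (Fin d)) chat'))
    (hangle : (⨆ c : C, vecAngle (c : EuclideanSpace ℝ (Fin d)) chat₁) < π / 2) :
    chat₁ = chat₂ := by
  classical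
  by_contra hne12
  set α := ⨆ c : C, vecAngle (c : EuclideanSpace ℝ (Fin d)) chat₁ with hα
  have hα2 : (⨆ c : C, vecAngle (c : EuclideanSpace ℝ (Fin d)) chat₂) = α :=
    le_antisymm (hopt₂ chat₁ h₁) (hopt₁ chat₂ h₂)
  -- there is a nonzero element of C
  obtain ⟨c₀, hc₀C, hc₀⟩ : ∃ c₀ ∈ C, c₀ ≠ 0 := by
    by_contra h
    push_neg at h
    exact hC (Set.eq_singleton_iff_nonempty_unique_mem.2 ⟨hne, h⟩)
  have : Nonempty C := hne.to_subtype
  -- pointwise bounds: each angle is at most the sup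
  have hle₁ : ∀ c : C, vecAngle (c : EuclideanSpace ℝ (Fin d)) chat₁ ≤ α :=
    fun c => le_ciSup (bdd_vecAngle C chat₁) c
  have hle₂ : ∀ c : C, vecAngle (c : EuclideanSpace ℝ (Fin d)) chat₂ ≤ α := by
    intro c
    calc vecAngle (c : EuclideanSpace ℝ (Fin d)) chat₂ ≤ _ := le_ciSup (bdd_vecAngle C chat₂) c
    _ = α := hα2
  have hc₀n : (0:ℝ) < ‖c₀‖ := norm_pos_iff.mpr hc₀
  have hα0 : 0 ≤ α := le_trans (vecAngle_nonneg _ _) (hle₁ ⟨c₀, hc₀C⟩)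
  have hcosα : 0 < Real.cos α := Real.cos_pos_of_mem_Ioo ⟨by linarith [Real.pi_pos], hangle⟩
  -- inner product lower bound for nonzero c
  have key : ∀ (chat : EuclideanSpace ℝ (Fin d)), ‖chat‖ = 1 →
      (∀ c : C, vecAngle (c : EuclideanSpace ℝ (Fin d)) chat ≤ α) →
      ∀ c ∈ C, c ≠ 0 → ‖c‖ * Real.cos α ≤ ⟪c, chat⟫ := by
    intro chat hchat hsup c hcC hc
    have hcn : (0:ℝ) < ‖c‖ := norm_pos_iff.mpr hc
    have hCS : |⟪c, chat⟫| ≤ ‖c‖ := by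
      have := abs_real_inner_le_norm c chat
      rwa [hchat, mul_one] at this
    have ht1 : ⟪c, chat⟫ / ‖c‖ ≤ 1 := by
      rw [div_le_one hcn]; exact (abs_le.1 hCS).2
    have ht2 : -1 ≤ ⟪c, chat⟫ / ‖c‖ := by
      rw [le_div_iff₀ hcn, neg_mul, one_mul]; exact (abs_le.1 hCS).1
    have hva : vecAngle c chat = Real.arccos (⟪c, chat⟫ / ‖c‖) := by
      unfold vecAngle; rw [if_neg hc]
    have harc : Real.arccos (⟪c, chat⟫ / ‖c‖) ≤ α := by
      rw [← hva]; exact hsup ⟨c, hcC⟩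
    have : Real.cos α ≤ ⟪c, chat⟫ / ‖c‖ := by
      calc Real.cos α ≤ Real.cos (Real.arccos (⟪c, chat⟫ / ‖c‖)) := by
            apply Real.cos_le_cos_of_nonneg_of_le_pi (Real.arccos_nonneg _)
              (by linarith [Real.pi_pos]) harc
        _ = ⟪c, chat⟫ / ‖c‖ := Real.cos_arccos ht2 ht1
    calc ‖c‖ * Real.cos α ≤ ‖c‖ * (⟪c, chat⟫ / ‖c‖) := by
          exact mul_le_mul_of_nonneg_left this hcn.le
      _ = ⟪c, chat⟫ := by field_simp
  have hk₁ := key chat₁ h₁ hle₁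
  have hk₂ := key chat₂ h₂ hle₂
  -- α > 0, else chat₁ = chat₂
  have hαpos : 0 < α := by
    rcases lt_or_eq_of_le hα0 with h | h
    · exact h
    · exfalso
      have heq : ∀ (chat : EuclideanSpace ℝ (Fin d)), ‖chat‖ = 1 →
          ‖c₀‖ * Real.cos α ≤ ⟪c₀, chat⟫ → c₀ = ‖c₀‖ • chat := by
        intro chat hchat hic
        have : ⟪c₀, chat⟫ = ‖c₀‖ * ‖chat‖ := by
          rw [hchat, mul_one]
          refine le_antisymm ?_ ?_
          · have := abs_real_inner_le_norm c₀ chat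
            rw [hchat, mul_one] at this
            exact (abs_le.1 this).2
          · calc ‖c₀‖ = ‖c₀‖ * Real.cos α := by rw [← h, Real.cos_zero, mul_one]
              _ ≤ _ := hic
        have h' := inner_eq_norm_mul_iff_real.1 this
        rw [hchat, one_smul] at h'
        exact h'
      have e1 := heq chat₁ h₁ (hk₁ c₀ hc₀C hc₀)
      have e2 := heq chat₂ h₂ (hk₂ c₀ hc₀C hc₀)
      apply hne12
      have := e1.symm.trans e2
      exact smul_right_injective _ (ne_of_gt hc₀n) this
  -- the midpoint direction
  set s := chat₁ + chat₂ with hs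
  have hs0 : s ≠ 0 := by
    intro h
    have : ⟪c₀, chat₂⟫ = -⟪c₀, chat₁⟫ := by
      have : chat₂ = -chat₁ := by
        have := congrArg (fun x => x - chat₁) h
        simpa [hs, add_sub_cancel_left] using this
      rw [this, inner_neg_right]
    have p1 : 0 < ⟪c₀, chat₁⟫ := lt_of_lt_of_le (mul_pos hc₀n hcosα) (hk₁ c₀ hc₀C hc₀)
    have p2 : 0 < ⟪c₀, chat₂⟫ := lt_of_lt_of_le (mul_pos hc₀n hcosα) (hk₂ c₀ hc₀C hc₀)
    rw [this] at p2
    linarith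
  have hsn : (0:ℝ) < ‖s‖ := norm_pos_iff.mpr hs0
  have hslt : ‖s‖ < 2 := by
    have hinner : ⟪chat₁, chat₂⟫ < 1 :=
      (inner_lt_one_iff_real_of_norm_eq_one h₁ h₂).2 hne12
    have hsq : ‖s‖ ^ 2 = 2 + 2 * ⟪chat₁, chat₂⟫ := by
      rw [hs, @norm_add_sq_real]
      rw [h₁, h₂]
      ring
    nlinarith
  set m : EuclideanSpace ℝ (Fin d) := ‖s‖⁻¹ • s with hm
  have hmn : ‖m‖ = 1 := by
    rw [hm, norm_smul, norm_inv, norm_norm, inv_mul_cancel₀ (ne_of_gt hsn)]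
  set x : ℝ := 2 * Real.cos α / ‖s‖ with hx
  have hxgt : Real.cos α < x := by
    rw [hx, lt_div_iff₀ hsn]
    nlinarith
  -- sup over m is at most arccos x
  have hsup_m : (⨆ c : C, vecAngle (c : EuclideanSpace ℝ (Fin d)) m) ≤ Real.arccos x := by
    apply ciSup_le
    intro c
    by_cases hc : (c : EuclideanSpace ℝ (Fin d)) = 0
    · unfold vecAngle; rw [if_pos hc]; exact Real.arccos_nonneg _
    · have hcn : (0:ℝ) < ‖(c : EuclideanSpace ℝ (Fin d))‖ := norm_pos_iff.mpr hc
      have hinner : ⟪(c : EuclideanSpace ℝ (Fin d)), m⟫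
          = ‖s‖⁻¹ * (⟪(c : EuclideanSpace ℝ (Fin d)), chat₁⟫
            + ⟪(c : EuclideanSpace ℝ (Fin d)), chat₂⟫) := by
        rw [hm, real_inner_smul_right, hs, inner_add_right]
      have hge : x ≤ ⟪(c : EuclideanSpace ℝ (Fin d)), m⟫ / ‖(c : EuclideanSpace ℝ (Fin d))‖ := by
        rw [hx, div_le_div_iff₀ hsn hcn, hinner]
        have b1 := hk₁ c c.2 hc
        have b2 := hk₂ c c.2 hc
        have hsimp : ‖s‖⁻¹ * (⟪(c : EuclideanSpace ℝ (Fin d)), chat₁⟫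
            + ⟪(c : EuclideanSpace ℝ (Fin d)), chat₂⟫) * ‖s‖
            = ⟪(c : EuclideanSpace ℝ (Fin d)), chat₁⟫
            + ⟪(c : EuclideanSpace ℝ (Fin d)), chat₂⟫ := by
          field_simp
        rw [hsimp]
        nlinarith
      have hva : vecAngle (c : EuclideanSpace ℝ (Fin d)) m
          = Real.arccos (⟪(c : EuclideanSpace ℝ (Fin d)), m⟫ / ‖(c : EuclideanSpace ℝ (Fin d))‖) := by
        unfold vecAngle; rw [if_neg hc]
      rw [hva]
      exact arccos_antitone hge
  -- arccos x < α
  have hlt : Real.arccos x < α := by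
    by_cases hx1 : 1 ≤ x
    · rw [Real.arccos_of_one_le hx1]; exact hαpos
    · push_neg at hx1
      have hx2 : -1 ≤ x := by nlinarith
      calc Real.arccos x < Real.arccos (Real.cos α) := by
            exact Real.strictAntiOn_arccos ⟨by linarith, Real.cos_le_one α⟩
              ⟨hx2, hx1.le⟩ hxgt
        _ = α := Real.arccos_cos hα0 (by linarith [Real.pi_pos])
  have hfin := hopt₁ m hmn
  linarith [le_trans hfin hsup_m]
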